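/- Let A be an N×N row-stochastic matrix, let J, K ⊆ {1,...,N} be subsets with |K| > |J|, and suppose that for every pair of subsets M₁, M₂ of equal cardinality, ∑_{i∉M₁}∑_{j∈M₂} A_{ij} ≤ Ψ ∑_{i∈M₁}∑_{j∉M₂} A_{ij} (balanced asymmetry with bound Ψ). Then ∑_{i∈K}∑_{j∉J} A_{ij} ≥ |K|/(1 + Ψ|K|) ≥ 1/(1+Ψ). -/

import Mathlib

def RowStochastic {N : ℕ} (A : Matrix (Fin N) (Fin N) ℝ) : Prop :=
  (∀ i j, 0 ≤ A i j) ∧ ∀ i, ∑ j, A i j = 1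

theorem stmt3 {N : ℕ} (A : Matrix (Fin N) (Fin N) ℝ) (Ψ : ℝ) (hΨ : 0 ≤ Ψ)
    (hA : RowStochastic A) (J K : Finset (Fin N)) (hJK : J.card < K.card)
    (hbal : ∀ M1 M2 : Finset (Fin N), M1.card = M2.card →
      ∑ i ∈ M1ᶜ, ∑ j ∈ M2, A i j ≤ Ψ * ∑ i ∈ M1, ∑ j ∈ M2ᶜ, A i j) :
    (K.card : ℝ) / (1 + Ψ * K.card) ≤ ∑ i ∈ K, ∑ j ∈ Jᶜ, A i j ∧
    1 / (1 + Ψ) ≤ (K.card : ℝ) / (1 + Ψ * K.card) := by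
  obtain ⟨hnn, hrow⟩ := hA
  set S : ℝ := ∑ i ∈ K, ∑ j ∈ Jᶜ, A i j with hS
  have hSnn : 0 ≤ S := Finset.sum_nonneg fun i _ => Finset.sum_nonneg fun j _ => hnn i j
  have hk1 : 1 ≤ K.card := Nat.lt_of_le_of_lt (Nat.zero_le _) hJK
  -- key: each row-sum over J is ≤ Ψ * S
  have key : ∀ i ∈ K, ∑ j ∈ J, A i j ≤ Ψ * S := by
    intro i hi
    have hcard : J.card ≤ (K.erase i).card := by
      rw [Finset.card_erase_of_mem hi]; omega
    obtain ⟨M1, hM1sub, hM1card⟩ := Finset.exists_subset_card_eq hcard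
    have hi' : i ∈ M1ᶜ := by
      simp only [Finset.mem_compl]
      intro h
      exact (Finset.notMem_erase i K) (hM1sub h)
    have h1 : ∑ j ∈ J, A i j ≤ ∑ i' ∈ M1ᶜ, ∑ j ∈ J, A i' j :=
      Finset.single_le_sum (fun i' _ => Finset.sum_nonneg fun j _ => hnn i' j) hi'
    have h2 := hbal M1 J hM1card
    have h3 : ∑ i' ∈ M1, ∑ j ∈ Jᶜ, A i' j ≤ S := by
      apply Finset.sum_le_sum_of_subset_of_nonneg
      · exact hM1sub.trans (Finset.erase_subset i K)
      · intro i' _ _; exact Finset.sum_nonneg fun j _ => hnn i' j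
    calc ∑ j ∈ J, A i j ≤ ∑ i' ∈ M1ᶜ, ∑ j ∈ J, A i' j := h1
      _ ≤ Ψ * ∑ i' ∈ M1, ∑ j ∈ Jᶜ, A i' j := h2
      _ ≤ Ψ * S := by exact mul_le_mul_of_nonneg_left h3 hΨ
  have hsum : (K.card : ℝ) - S = ∑ i ∈ K, ∑ j ∈ J, A i j := by
    have : ∀ i ∈ K, ∑ j ∈ J, A i j = 1 - ∑ j ∈ Jᶜ, A i j := by
      intro i _
      have := Finset.sum_add_sum_compl J (A i)
      rw [hrow i] at this
      linarith
    rw [Finset.sum_congr rfl this, Finset.sum_sub_distrib]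
    simp [hS]
  have hmain : (K.card : ℝ) - S ≤ K.card * (Ψ * S) := by
    rw [hsum]
    calc ∑ i ∈ K, ∑ j ∈ J, A i j ≤ ∑ _i ∈ K, Ψ * S := Finset.sum_le_sum key
      _ = K.card * (Ψ * S) := by rw [Finset.sum_const, nsmul_eq_mul]
  have hk1' : (1 : ℝ) ≤ K.card := by exact_mod_cast hk1
  have hpos : 0 < 1 + Ψ * K.card := by positivity
  have hpos2 : 0 < 1 + Ψ := by linarith
  constructor
  · rw [div_le_iff₀ hpos]
    nlinarith
  · rw [div_le_div_iff₀ hpos2 hpos]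
    nlinarith
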